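/- arXiv:1507.07860 — 2 statements merged into one kernel-verified Lean document; each statement's English description precedes it below -/
import Mathlib

section
/- Let p > 1 and let A = Cyc(A₁,…,A_p) be a nonnegative p-cyclic real matrix, where A_i is an r_i × r_{i+1} matrix for i = 1,…,p−1 and A_p is an r_p × r_1 matrix, and let Ã be the matrix obtained from A by replacing the block A_p by −A_p. Then for every odd integer k with 0 ≤ k ≤ 2p−1, there exists an invertible complex diagonal matrix L whose diagonal entries all have modulus 1 such that e^{iπk/p}·L A L⁻¹ = Ã; in particular sp(Ã) = e^{iπk/p}·sp(A). -/
open Matrix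

/-- The spectrum of a real square matrix: the multiset of complex roots of its
characteristic polynomial (eigenvalues with multiplicity). -/
noncomputable def spec {ι : Type*} [Fintype ι] [DecidableEq ι] (M : Matrix ι ι ℝ) : Multiset ℂ :=
  (M.map Complex.ofReal).charpoly.roots

/-- The spectral radius: the maximum of the moduli of the complex eigenvalues. -/
noncomputable def specRadius {ι : Type*} [Fintype ι] [DecidableEq ι] (M : Matrix ι ι ℝ) : ℝ :=
  sSup ((fun z : ℂ => ‖z‖) '' {z | z ∈ spec M})

/-- Entrywise absolute value of a real matrix. -/
def matAbs {ι : Type*} (M : Matrix ι ι ℝ) : Matrix ι ι ℝ := fun i j => |M i j|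

/-- A walk of length `k` from `i` to `j` in the digraph of `A`
(arcs are the pairs with nonzero entry). -/
def HasWalk {ι : Type*} (A : Matrix ι ι ℝ) (i j : ι) (k : ℕ) : Prop :=
  ∃ f : ℕ → ι, f 0 = i ∧ f k = j ∧ ∀ t < k, A (f t) (f (t + 1)) ≠ 0

/-- `A` is irreducible: its digraph is strongly connected. -/
def MatIrreducible {ι : Type*} (A : Matrix ι ι ℝ) : Prop :=
  ∀ i j : ι, ∃ k, HasWalk A i j k

/-- `p` is the period of `A`: the gcd of the lengths of the closed walks of its digraph. -/
def IsPeriod {ι : Type*} (A : Matrix ι ι ℝ) (p : ℕ) : Prop :=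
  (∀ k, 0 < k → (∃ i, HasWalk A i i k) → p ∣ k) ∧
  ∀ q : ℕ, (∀ k, 0 < k → (∃ i, HasWalk A i i k) → q ∣ k) → q ∣ p

/-- `B'` is `{-1,1}`-diagonally similar to `B`:
`B' = Λ⁻¹ * B * Λ` for a diagonal matrix `Λ` with diagonal entries in `{-1,1}`. -/
def DiagSignSimilar {ι : Type*} [Fintype ι] [DecidableEq ι] (B B' : Matrix ι ι ℝ) : Prop :=
  ∃ d : ι → ℝ, (∀ i, d i = 1 ∨ d i = -1) ∧
    B' = (Matrix.diagonal d)⁻¹ * B * Matrix.diagonal d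

/-- The `p`-cyclic block matrix `Cyc(A₁, …, A_p)`: the `(i, i+1)` block (indices mod `p`,
so including the `(p, 1)` block) is `Ab i`, and all other blocks vanish. -/
def cyc {p : ℕ} [NeZero p] (r : Fin p → ℕ)
    (Ab : ∀ i : Fin p, Matrix (Fin (r i)) (Fin (r (i + 1))) ℝ) :
    Matrix ((i : Fin p) × Fin (r i)) ((i : Fin p) × Fin (r i)) ℝ :=
  fun x y => if h : y.1 = x.1 + 1 then Ab x.1 x.2 (Fin.cast (congrArg r h) y.2) else 0

section Helpers

open Polynomial

variable {n : Type*} [Fintype n] [DecidableEq n]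

lemma eval_charpoly' (M : Matrix n n ℂ) (x : ℂ) :
    M.charpoly.eval x = (Matrix.diagonal (fun _ => x) - M).det := by
  rw [Matrix.charpoly, ← Polynomial.coe_evalRingHom, RingHom.map_det]
  congr 1
  ext i j
  by_cases h : i = j <;>
    simp [h, charmatrix_apply, Matrix.diagonal_apply, Matrix.map_apply]

lemma charpoly_conj' (D M : Matrix n n ℂ) (hD : IsUnit D.det) :
    (D * M * D⁻¹).charpoly = M.charpoly := by
  apply Polynomial.funext
  intro x
  rw [eval_charpoly', eval_charpoly']
  have h2 : Matrix.diagonal (fun _ : n => x) - D * M * D⁻¹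
      = D * (Matrix.diagonal (fun _ => x) - M) * D⁻¹ := by
    rw [Matrix.mul_sub, Matrix.sub_mul, ← Matrix.smul_one_eq_diagonal x, Matrix.mul_smul,
      Matrix.smul_mul, Matrix.mul_one, Matrix.mul_nonsing_inv D hD]
  rw [h2, Matrix.det_mul, Matrix.det_mul, Matrix.det_nonsing_inv, Ring.inverse_eq_inv']
  rw [mul_comm D.det, mul_assoc, mul_inv_cancel₀ hD.ne_zero, mul_one]

lemma roots_charpoly_smul (N : Matrix n n ℂ) {c : ℂ} (hc : c ≠ 0) :
    (c • N).charpoly.roots = N.charpoly.roots.map (fun z => c * z) := by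
  classical
  have hsp : N.charpoly.Splits := IsAlgClosed.splits N.charpoly
  have hcard : N.charpoly.roots.card = Fintype.card n := by
    rw [(Polynomial.splits_iff_card_roots).mp hsp, Matrix.charpoly_natDegree_eq_dim]
  have key : (c • N).charpoly
      = ((N.charpoly.roots.map (fun z => c * z)).map (fun a => X - C a)).prod := by
    apply Polynomial.funext
    intro x
    rw [eval_charpoly']
    have h1 : Matrix.diagonal (fun _ : n => x) - c • N
        = c • (Matrix.diagonal (fun _ : n => c⁻¹ * x) - N) := by
      rw [smul_sub]
      congr 1
      ext i j
      by_cases h : i = j <;>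
        simp [h, Matrix.diagonal_apply, Matrix.smul_apply, mul_inv_cancel_left₀ hc]
    rw [h1, Matrix.det_smul, ← eval_charpoly']
    have h2 : N.charpoly.eval (c⁻¹ * x) = (N.charpoly.roots.map (fun a => c⁻¹ * x - a)).prod := by
      conv_lhs => rw [hsp.eq_prod_roots_of_monic
        (Matrix.charpoly_monic N)]
      rw [Polynomial.eval_multiset_prod, Multiset.map_map]
      simp
    rw [h2, Polynomial.eval_multiset_prod, Multiset.map_map, Multiset.map_map]
    have h3 : (Multiset.map ((Polynomial.eval x ∘ (fun a => X - C a)) ∘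
        fun z => c * z) N.charpoly.roots)
        = Multiset.map ((fun z => c * z) ∘ fun a => c⁻¹ * x - a) N.charpoly.roots := by
      apply Multiset.map_congr rfl
      intro a _
      simp only [Function.comp_apply, Polynomial.eval_sub, Polynomial.eval_X, Polynomial.eval_C]
      field_simp
    rw [h3, ← Multiset.map_map, Multiset.prod_map_mul, Multiset.map_const', Multiset.prod_replicate,
      Multiset.card_map, hcard, Multiset.map_id']
  rw [key, Polynomial.roots_multiset_prod_X_sub_C]

end Helpers

theorem stmt_10 {p : ℕ} [NeZero p] (hp : 1 < p) (r : Fin p → ℕ)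
    (Ab : ∀ i : Fin p, Matrix (Fin (r i)) (Fin (r (i + 1))) ℝ)
    (hnn : ∀ i x y, 0 ≤ Ab i x y)
    (k : ℕ) (hko : Odd k) (hk : k ≤ 2 * p - 1) :
    (∃ d : ((i : Fin p) × Fin (r i)) → ℂ, (∀ v, ‖d v‖ = 1) ∧
      Complex.exp (Complex.I * Real.pi * k / p) •
        (Matrix.diagonal d * (cyc r Ab).map Complex.ofReal * (Matrix.diagonal d)⁻¹) =
        (cyc r (fun i => if i = (⟨p - 1, by omega⟩ : Fin p) then -(Ab i) else Ab i)).map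
          Complex.ofReal) ∧
    spec (cyc r (fun i => if i = (⟨p - 1, by omega⟩ : Fin p) then -(Ab i) else Ab i)) =
      (spec (cyc r Ab)).map (fun z => Complex.exp (Complex.I * Real.pi * k / p) * z) := by
  set c : ℂ := Complex.exp (Complex.I * Real.pi * k / p) with hc_def
  have hc : c ≠ 0 := Complex.exp_ne_zero _
  have hpC : (p : ℂ) ≠ 0 := Nat.cast_ne_zero.mpr (NeZero.ne p)
  set d : ((i : Fin p) × Fin (r i)) → ℂ :=
    fun v => Complex.exp (((Real.pi * k * v.1.val / p : ℝ) : ℂ) * Complex.I) with hd_def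
  have habs : ∀ v, ‖d v‖ = 1 := fun v => Complex.norm_exp_ofReal_mul_I _
  -- the key scalar identity
  have key : ∀ x y : ((i : Fin p) × Fin (r i)), y.1 = x.1 + 1 →
      c * (d x * (d y)⁻¹) = if x.1 = (⟨p - 1, by omega⟩ : Fin p) then -1 else 1 := by
    intro x y h
    have hj : (y.1 : ℕ) = (x.1.val + 1) % p := by
      rw [h, Fin.add_def, Fin.val_one']
      simp [Nat.mod_eq_of_lt hp]
    rw [hd_def]
    simp only
    rw [← Complex.exp_neg, ← Complex.exp_add, ← Complex.exp_add]
    by_cases hx : x.1 = (⟨p - 1, by omega⟩ : Fin p)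
    · have hxv : (x.1 : ℕ) = p - 1 := by rw [hx]
      have hyv : (y.1 : ℕ) = 0 := by
        rw [hj, hxv, Nat.sub_add_cancel (by omega), Nat.mod_self]
      rw [if_pos hx]
      have : Complex.I * Real.pi * k / p + (((Real.pi * k * x.1.val / p : ℝ) : ℂ) * Complex.I
          + -(((Real.pi * k * y.1.val / p : ℝ) : ℂ) * Complex.I))
          = (k : ℂ) * (Real.pi * Complex.I) := by
        rw [hxv, hyv]
        push_cast [Nat.cast_sub (by omega : 1 ≤ p)]
        field_simp
        ring
      rw [this, Complex.exp_nat_mul, Complex.exp_pi_mul_I, hko.neg_one_pow]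
    · have hxv : (x.1 : ℕ) < p - 1 := by
        have h1 : (x.1 : ℕ) < p := x.1.isLt
        have h2 : (x.1 : ℕ) ≠ p - 1 := fun hh => hx (Fin.ext hh)
        omega
      have hyv : (y.1 : ℕ) = x.1.val + 1 := by
        rw [hj, Nat.mod_eq_of_lt (by omega)]
      rw [if_neg hx]
      have : Complex.I * Real.pi * k / p + (((Real.pi * k * x.1.val / p : ℝ) : ℂ) * Complex.I
          + -(((Real.pi * k * y.1.val / p : ℝ) : ℂ) * Complex.I)) = 0 := by
        rw [hyv]
        push_cast
        field_simp
        ring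
      rw [this, Complex.exp_zero]
  have H : c • (Matrix.diagonal d * (cyc r Ab).map Complex.ofReal * (Matrix.diagonal d)⁻¹) =
      (cyc r (fun i => if i = (⟨p - 1, by omega⟩ : Fin p) then -(Ab i) else Ab i)).map
        Complex.ofReal := by
    have hinv : (Matrix.diagonal d)⁻¹ = Matrix.diagonal (fun v => (d v)⁻¹) := by
      refine Matrix.inv_eq_right_inv ?_
      rw [Matrix.diagonal_mul_diagonal]
      convert Matrix.diagonal_one with v
      exact mul_inv_cancel₀ (Complex.exp_ne_zero _)
    ext x y
    rw [hinv]
    simp only [Matrix.smul_apply, Matrix.diagonal_mul, Matrix.mul_diagonal, Matrix.map_apply,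
      cyc]
    by_cases h : y.1 = x.1 + 1
    · rw [dif_pos h, dif_pos h]
      have := key x y h
      by_cases hx : x.1 = (⟨p - 1, by omega⟩ : Fin p)
      · rw [if_pos hx] at this ⊢
        simp only [Matrix.neg_apply, Complex.ofReal_neg, smul_eq_mul]
        calc c * (d x * ((Ab x.1 x.2 (Fin.cast (congrArg r h) y.2) : ℂ)) * (d y)⁻¹)
            = (c * (d x * (d y)⁻¹)) * (Ab x.1 x.2 (Fin.cast (congrArg r h) y.2) : ℂ) := by ring
          _ = _ := by rw [this]; ring
      · rw [if_neg hx] at this ⊢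
        simp only [smul_eq_mul]
        calc c * (d x * ((Ab x.1 x.2 (Fin.cast (congrArg r h) y.2) : ℂ)) * (d y)⁻¹)
            = (c * (d x * (d y)⁻¹)) * (Ab x.1 x.2 (Fin.cast (congrArg r h) y.2) : ℂ) := by ring
          _ = _ := by rw [this]; ring
    · rw [dif_neg h, dif_neg h]
      simp
  refine ⟨⟨d, habs, H⟩, ?_⟩
  have hdet : IsUnit (Matrix.diagonal d).det := by
    rw [Matrix.det_diagonal]
    exact isUnit_iff_ne_zero.mpr
      (Finset.prod_ne_zero_iff.mpr fun v _ => Complex.exp_ne_zero _)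
  rw [spec, spec, ← H, roots_charpoly_smul _ hc, charpoly_conj' _ _ hdet]
end

section
/- Let A be an n×n irreducible nonnegative symmetric real matrix. The following are equivalent: (i) there exists a real skew-symmetric matrix B with |B| = A and sp(B) = i·sp(A); (ii) there exists a permutation matrix P such that PAP^T has the block form [[0, X],[X^T, 0]] where the two zero diagonal blocks are square. -/
open Matrix

section AuxProof

open Polynomial

variable {ι : Type*} [Fintype ι] [DecidableEq ι]

/-- charpoly is invariant under conjugation by a two-sided invertible matrix. -/
lemma conj_charpoly {R : Type*} [CommRing R] (U V M : Matrix ι ι R)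
    (h1 : U * V = 1) (h2 : V * U = 1) : (U * M * V).charpoly = M.charpoly := by
  have hm : charmatrix (U * M * V) = U.map C * charmatrix M * V.map C := by
    unfold charmatrix
    have hUV : U.map (C : R →+* R[X]) * V.map C = 1 := by
      rw [← Matrix.map_mul, h1, Matrix.map_one _ (map_zero _) (map_one _)]
    have hmul : U.map (C : R →+* R[X]) * (M.map C) * V.map C = (U * M * V).map C := by
      rw [← Matrix.map_mul, ← Matrix.map_mul]
    simp only [RingHom.mapMatrix_apply]
    rw [mul_sub, sub_mul, hmul]
    congr 1
    rw [((Matrix.scalar_commute X (fun r => Commute.all X r) (U.map C)).symm :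
        U.map (C : R →+* R[X]) * Matrix.scalar ι X = Matrix.scalar ι X * U.map C),
      mul_assoc, hUV, mul_one]
  unfold Matrix.charpoly
  rw [hm, det_mul, det_mul, mul_comm, ← mul_assoc, ← det_mul, ← Matrix.map_mul, h2,
    Matrix.map_one _ (map_zero _) (map_one _), det_one, one_mul]

lemma charpoly_diagonal {R : Type*} [CommRing R] (d : ι → R) :
    (Matrix.diagonal d).charpoly = ∏ i, (X - C (d i)) := by
  unfold Matrix.charpoly
  have : charmatrix (Matrix.diagonal d) = Matrix.diagonal (fun i => X - C (d i)) := by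
    ext i j
    by_cases h : i = j
    · subst h; simp [charmatrix_apply_eq]
    · simp [charmatrix_apply_ne _ _ _ h, Matrix.diagonal_apply_ne _ h]
  rw [this, det_diagonal]

/-- Key lemma: spectrum and power traces of a conjugated diagonal matrix. -/
lemma diag_conj_spec {M U V : Matrix ι ι ℂ} {d : ι → ℂ}
    (h1 : U * V = 1) (h2 : V * U = 1) (hM : M = U * Matrix.diagonal d * V) :
    M.charpoly.roots = (Finset.univ.val.map d) ∧
      ∀ k : ℕ, (M ^ k).trace = ∑ i, d i ^ k := by
  constructor
  · rw [hM, conj_charpoly U V _ h1 h2, _root_.charpoly_diagonal]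
    have : (∏ i, (X - C (d i))) = ((Finset.univ.val.map d).map fun a => X - C a).prod := by
      rw [Multiset.map_map, Finset.prod_eq_multiset_prod]; rfl
    rw [this, roots_multiset_prod_X_sub_C]
  · intro k
    have hpow : M ^ k = U * Matrix.diagonal (fun i => d i ^ k) * V := by
      induction k with
      | zero =>
        have hd : (fun i : ι => d i ^ 0) = fun _ => (1 : ℂ) := by funext i; simp
        rw [pow_zero, hd, Matrix.diagonal_one, mul_one, h1]

      | succ k ih =>
        rw [pow_succ, ih, hM]
        have : Matrix.diagonal (fun i => d i ^ k) * (V * (U * Matrix.diagonal d))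
            = Matrix.diagonal (fun i => d i ^ (k+1)) := by
          rw [show V * (U * Matrix.diagonal d) = V * U * Matrix.diagonal d by rw [mul_assoc],
            h2, one_mul, Matrix.diagonal_mul_diagonal]
          refine congrArg Matrix.diagonal (funext fun i => ?_)
          rw [pow_succ]
        calc U * Matrix.diagonal (fun i => d i ^ k) * V * (U * Matrix.diagonal d * V)
            = U * (Matrix.diagonal (fun i => d i ^ k) * (V * (U * Matrix.diagonal d))) * V := by
              noncomm_ring
          _ = U * Matrix.diagonal (fun i => d i ^ (k+1)) * V := by rw [this]
    rw [hpow, Matrix.trace_mul_cycle, h2, one_mul, Matrix.trace_diagonal]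

variable {ι : Type*} [Fintype ι] [DecidableEq ι]


lemma herm_diag {M : Matrix ι ι ℂ} (hM : M.IsHermitian) :
    ∃ (U V : Matrix ι ι ℂ) (e : ι → ℝ), U * V = 1 ∧ V * U = 1 ∧
      M = U * Matrix.diagonal (fun i => (e i : ℂ)) * V := by
  refine ⟨hM.eigenvectorUnitary, star (hM.eigenvectorUnitary : Matrix ι ι ℂ), hM.eigenvalues,
    ?_, ?_, ?_⟩
  · exact (Matrix.mem_unitaryGroup_iff).mp hM.eigenvectorUnitary.2
  · exact (Matrix.mem_unitaryGroup_iff').mp hM.eigenvectorUnitary.2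
  · simpa [Function.comp_def] using hM.spectral_theorem

lemma smul_diag_conj (c : ℂ) (U V : Matrix ι ι ℂ) (f : ι → ℂ) :
    c • (U * Matrix.diagonal f * V) = U * Matrix.diagonal (fun i => c * f i) * V := by
  rw [← Matrix.smul_mul, ← Matrix.mul_smul]
  congr 1
  rw [← Matrix.diagonal_smul]
  rfl

lemma map_ofReal_pow {n : ℕ} (A : Matrix (Fin n) (Fin n) ℝ) (k : ℕ) :
    (A ^ k).map Complex.ofReal = (A.map Complex.ofReal) ^ k := by
  induction k with
  | zero => simp [Matrix.map_one Complex.ofReal Complex.ofReal_zero Complex.ofReal_one]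
  | succ k ih =>
    rw [pow_succ, pow_succ, ← ih]
    exact Matrix.map_mul (L := A ^ k) (M := A) (f := Complex.ofRealHom)

lemma trace_map_ofReal {n : ℕ} (A : Matrix (Fin n) (Fin n) ℝ) :
    (A.map Complex.ofReal).trace = ((A.trace : ℝ) : ℂ) := by
  simp [Matrix.trace, Matrix.map_apply]

/-- For a real symmetric matrix: scaled spectra and power traces. -/
lemma symm_spec {n : ℕ} (A : Matrix (Fin n) (Fin n) ℝ) (hsym : Aᵀ = A) :
    ∃ e : Fin n → ℝ,
      (∀ c : ℂ, (c • (A.map Complex.ofReal)).charpoly.roots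
          = Finset.univ.val.map (fun i => c * (e i : ℂ))) ∧
      ∀ k : ℕ, ((A ^ k).trace : ℂ) = ∑ i, (e i : ℂ) ^ k := by
  have hherm : (A.map Complex.ofReal).IsHermitian := by
    ext i j
    simp only [Matrix.conjTranspose_apply, Matrix.map_apply, Complex.star_def,
      Complex.conj_ofReal]
    exact congrArg Complex.ofReal (congrFun (congrFun hsym j) i).symm
  obtain ⟨U, V, e, h1, h2, hM⟩ := herm_diag hherm
  refine ⟨e, fun c => ?_, fun k => ?_⟩
  · have hM' : c • (A.map Complex.ofReal) = U * Matrix.diagonal (fun i => c * (e i : ℂ)) * V := by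
      rw [hM, smul_diag_conj]
    exact (diag_conj_spec h1 h2 hM').1
  · rw [← trace_map_ofReal, map_ofReal_pow]
    exact (diag_conj_spec h1 h2 hM).2 k

/-- For a real skew-symmetric matrix. -/
lemma skew_spec {n : ℕ} (B : Matrix (Fin n) (Fin n) ℝ) (hskew : Bᵀ = -B) :
    ∃ e : Fin n → ℝ,
      spec B = Finset.univ.val.map (fun i => (-Complex.I) * (e i : ℂ)) ∧
      ∀ k : ℕ, ((B ^ k).trace : ℂ) = ∑ i, ((-Complex.I) * (e i : ℂ)) ^ k := by
  have hherm : (Complex.I • (B.map Complex.ofReal)).IsHermitian := by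
    ext i j
    simp only [Matrix.conjTranspose_apply, Matrix.smul_apply, Matrix.map_apply, Complex.star_def]
    have hji : B j i = -B i j := by
      have := congrFun (congrFun hskew i) j
      simpa [Matrix.transpose_apply, Matrix.neg_apply] using this
    rw [hji, smul_eq_mul, smul_eq_mul, Complex.ofReal_neg, RingHom.map_mul, RingHom.map_neg,
      Complex.conj_I, Complex.conj_ofReal]
    ring
  obtain ⟨U, V, e, h1, h2, hM⟩ := herm_diag hherm
  have hB : B.map Complex.ofReal = U * Matrix.diagonal (fun i => (-Complex.I) * (e i : ℂ)) * V := by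
    have hBi : B.map Complex.ofReal = (-Complex.I) • (Complex.I • (B.map Complex.ofReal)) := by
      rw [smul_smul]
      simp
    rw [hBi, hM, smul_diag_conj]
  obtain ⟨hr, ht⟩ := diag_conj_spec h1 h2 hB
  exact ⟨e, hr, fun k => by rw [← trace_map_ofReal, map_ofReal_pow]; exact ht k⟩

variable {n : ℕ}

lemma pow_entry_nonneg (A : Matrix (Fin n) (Fin n) ℝ) (hnn : ∀ i j, 0 ≤ A i j) (k : ℕ) :
    ∀ i j, 0 ≤ (A ^ k) i j := by
  induction k with
  | zero => intro i j; by_cases h : i = j <;> simp [pow_zero, Matrix.one_apply, h]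
  | succ k ih =>
    intro i j
    rw [pow_succ, Matrix.mul_apply]
    exact Finset.sum_nonneg fun t _ => mul_nonneg (ih i t) (hnn t j)

lemma walk_one (A : Matrix (Fin n) (Fin n) ℝ) {i j : Fin n} (h : A i j ≠ 0) :
    HasWalk A i j 1 := by
  refine ⟨fun t => if t = 0 then i else j, by simp, by simp, fun t ht => ?_⟩
  interval_cases t
  simpa using h

lemma walk_trans {A : Matrix (Fin n) (Fin n) ℝ} {i j l : Fin n} {k m : ℕ}
    (h1 : HasWalk A i j k) (h2 : HasWalk A j l m) : HasWalk A i l (k + m) := by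
  obtain ⟨f, hf0, hfk, hf⟩ := h1
  obtain ⟨g, hg0, hgm, hg⟩ := h2
  refine ⟨fun s => if s ≤ k then f s else g (s - k), by simp [hf0], ?_, ?_⟩
  · by_cases h : m = 0
    · subst h
      simp only [add_zero, if_pos le_rfl, hfk]
      rw [← hg0, hgm]
    · have : ¬ (k + m ≤ k) := by omega
      simp only [this, if_false]
      rw [Nat.add_sub_cancel_left, hgm]
  · intro t ht
    by_cases h1t : t + 1 ≤ k
    · have h2t : t ≤ k := by omega
      simp only [h1t, h2t, if_pos]
      exact hf t (by omega)
    · by_cases h2t : t ≤ k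
      · have hkt : t = k := by omega
        subst hkt
        simp only [le_refl, if_pos, h1t, if_neg, Nat.add_sub_cancel_left]
        rw [hfk, ← hg0]
        simpa using hg 0 (by omega)
      · simp only [h1t, h2t, if_neg]
        have e1 : t + 1 - k = (t - k) + 1 := by omega
        rw [e1]
        exact hg (t - k) (by omega)

lemma pow_ne_zero_iff_walk (A : Matrix (Fin n) (Fin n) ℝ) (hnn : ∀ i j, 0 ≤ A i j) (k : ℕ) :
    ∀ i j, (A ^ k) i j ≠ 0 ↔ HasWalk A i j k := by
  induction k with
  | zero =>
    intro i j
    constructor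
    · intro h
      by_cases hij : i = j
      · exact ⟨fun _ => i, rfl, hij, by omega⟩
      · simp [pow_zero, Matrix.one_apply, hij] at h
    · rintro ⟨f, hf0, hfk, -⟩
      have : i = j := hf0 ▸ hfk ▸ rfl
      simp [pow_zero, Matrix.one_apply, this]
  | succ k ih =>
    intro i j
    rw [pow_succ, Matrix.mul_apply]
    constructor
    · intro h
      obtain ⟨t, -, ht⟩ := Finset.exists_ne_zero_of_sum_ne_zero h
      have h1 : (A ^ k) i t ≠ 0 := fun h0 => ht (by rw [h0, zero_mul])
      have h2 : A t j ≠ 0 := fun h0 => ht (by rw [h0, mul_zero])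
      exact walk_trans ((ih i t).mp h1) (walk_one A h2)
    · rintro ⟨f, hf0, hfk, hf⟩
      have h1 : HasWalk A i (f k) k := ⟨f, hf0, rfl, fun t ht => hf t (by omega)⟩
      have h2 : A (f k) j ≠ 0 := by
        have := hf k (by omega)
        rwa [show k + 1 = k + 1 from rfl, hfk] at this
      intro hsum
      have hterm : ∀ t ∈ Finset.univ, 0 ≤ (A ^ k) i t * A t j :=
        fun t _ => mul_nonneg (pow_entry_nonneg A hnn k i t) (hnn t j)
      have := (Finset.sum_eq_zero_iff_of_nonneg hterm).mp hsum (f k) (Finset.mem_univ _)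
      rcases mul_eq_zero.mp this with h | h
      · exact (ih i (f k)).mpr h1 h
      · exact h2 h

lemma bipartition (A : Matrix (Fin n) (Fin n) ℝ) (hirr : MatIrreducible A)
    (hodd : ∀ k, Odd k → ∀ i, ¬ HasWalk A i i k) (v : Fin n) :
    ∃ c : Fin n → Bool, ∀ i j, A i j ≠ 0 → c i ≠ c j := by
  choose K hK using hirr
  refine ⟨fun i => decide (K v i % 2 = 1), fun i j hij hc => ?_⟩
  have parity : ∀ (i : Fin n) (k : ℕ), HasWalk A v i k → k % 2 = K v i % 2 := by
    intro i k hw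
    have c1 : ¬ Odd (k + K i v) := fun ho => hodd _ ho v (walk_trans hw (hK i v))
    have c2 : ¬ Odd (K v i + K i v) := fun ho => hodd _ ho v (walk_trans (hK v i) (hK i v))
    rw [Nat.not_odd_iff_even, Nat.even_add] at c1 c2
    rw [Nat.even_iff, Nat.even_iff] at c1 c2
    omega
  have hwj : HasWalk A v j (K v i + 1) := walk_trans (hK v i) (walk_one A hij)
  have := parity j (K v i + 1) hwj
  have hci : (decide (K v i % 2 = 1) : Bool) = decide (K v j % 2 = 1) := hc
  rw [decide_eq_decide] at hci
  omega

variable {n : ℕ}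

lemma permConj_apply {α : Type*} [CommRing α] (σ : Equiv.Perm (Fin n)) (M : Matrix (Fin n) (Fin n) α)
    (i j : Fin n) : (σ.permMatrix α * M * (σ.permMatrix α)ᵀ) i j = M (σ i) (σ j) := by
  have h1 : σ.permMatrix α * M = M.submatrix σ id := PEquiv.toMatrix_toPEquiv_mul σ M
  have h2 : (σ.permMatrix α)ᵀ = σ.symm.toPEquiv.toMatrix := by
    rw [← PEquiv.toMatrix_symm, Equiv.toPEquiv_symm]
  rw [h1, h2, PEquiv.mul_toMatrix_toPEquiv]
  simp

lemma perm_mul_transpose {α : Type*} [CommRing α] (σ : Equiv.Perm (Fin n)) :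
    σ.permMatrix α * (σ.permMatrix α)ᵀ = 1 := by
  rw [← PEquiv.toMatrix_symm, ← Equiv.toPEquiv_symm, ← PEquiv.toMatrix_trans,
    ← Equiv.toPEquiv_trans]
  simp

lemma transpose_mul_perm {α : Type*} [CommRing α] (σ : Equiv.Perm (Fin n)) :
    (σ.permMatrix α)ᵀ * σ.permMatrix α = 1 := by
  rw [← PEquiv.toMatrix_symm, ← Equiv.toPEquiv_symm, ← PEquiv.toMatrix_trans,
    ← Equiv.toPEquiv_trans]
  simp

lemma color_to_blocks (A : Matrix (Fin n) (Fin n) ℝ) (hsym : Aᵀ = A)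
    (c : Fin n → Bool) (hc : ∀ i j, A i j ≠ 0 → c i ≠ c j) :
    (∃ (m l : ℕ) (h : m + l = n) (σ : Equiv.Perm (Fin n)) (X : Matrix (Fin m) (Fin l) ℝ),
      σ.permMatrix ℝ * A * (σ.permMatrix ℝ)ᵀ =
        Matrix.reindex (finSumFinEquiv.trans (finCongr h)) (finSumFinEquiv.trans (finCongr h))
          (Matrix.fromBlocks 0 X Xᵀ 0)) := by
  classical
  set p : Fin n → Prop := fun i => c i = false with hp
  have h : Fintype.card {i // p i} + Fintype.card {i // ¬ p i} = n := by
    rw [← Fintype.card_sum, Fintype.card_congr (Equiv.sumCompl p), Fintype.card_fin]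
  set m := Fintype.card {i // p i}
  set l := Fintype.card {i // ¬ p i}
  set eS : {i // p i} ≃ Fin m := Fintype.equivFin _ with heS
  set eT : {i // ¬ p i} ≃ Fin l := Fintype.equivFin _ with heT
  set e := finSumFinEquiv.trans (finCongr h) with he
  set σ : Equiv.Perm (Fin n) :=
    (finCongr h).symm.trans ((finSumFinEquiv.symm).trans
      ((Equiv.sumCongr eS.symm eT.symm).trans (Equiv.sumCompl p))) with hσ
  set X : Matrix (Fin m) (Fin l) ℝ := fun a b => A (eS.symm a) (eT.symm b) with hX
  refine ⟨m, l, h, σ, X, ?_⟩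
  ext a b
  rw [permConj_apply, Matrix.reindex_apply, Matrix.submatrix_apply]
  have hσa : ∀ a : Fin n, σ a = Equiv.sumCompl p
      (Equiv.sumCongr eS.symm eT.symm (e.symm a)) := fun _ => rfl
  rw [hσa a, hσa b]
  rcases hu : e.symm a with x | x <;> rcases hv : e.symm b with y | y
  · simp only [Equiv.sumCongr_apply, Sum.map_inl, Equiv.sumCompl_apply_inl,
      Matrix.fromBlocks_apply₁₁, Matrix.zero_apply]
    by_contra hne
    exact hc _ _ hne (by rw [(eS.symm x).2, (eS.symm y).2])
  · simp only [Equiv.sumCongr_apply, Sum.map_inl, Sum.map_inr, Equiv.sumCompl_apply_inl,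
      Equiv.sumCompl_apply_inr, Matrix.fromBlocks_apply₁₂]
    rfl
  · simp only [Equiv.sumCongr_apply, Sum.map_inl, Sum.map_inr, Equiv.sumCompl_apply_inl,
      Equiv.sumCompl_apply_inr, Matrix.fromBlocks_apply₂₁, Matrix.transpose_apply]
    calc A (eT.symm x) (eS.symm y) = Aᵀ (eS.symm y) (eT.symm x) := rfl
      _ = A (eS.symm y) (eT.symm x) := by rw [hsym]
  · simp only [Equiv.sumCongr_apply, Sum.map_inr, Equiv.sumCompl_apply_inr,
      Matrix.fromBlocks_apply₂₂, Matrix.zero_apply]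
    by_contra hne
    have h1 : c (eT.symm x) = true := by
      have := (eT.symm x).2
      simpa [hp, Bool.not_eq_false] using this
    have h2 : c (eT.symm y) = true := by
      have := (eT.symm y).2
      simpa [hp, Bool.not_eq_false] using this
    exact hc _ _ hne (by rw [h1, h2])

variable {n : ℕ}






lemma perm_map (σ : Equiv.Perm (Fin n)) :
    (σ.permMatrix ℝ).map Complex.ofReal = σ.permMatrix ℂ := by
  ext i j
  simp [PEquiv.toMatrix, Matrix.map_apply, apply_ite Complex.ofReal]

lemma blocks_to_B (A : Matrix (Fin n) (Fin n) ℝ) (hsym : Aᵀ = A)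
    (hnn : ∀ i j, 0 ≤ A i j)
    (m l : ℕ) (h : m + l = n) (σ : Equiv.Perm (Fin n)) (X : Matrix (Fin m) (Fin l) ℝ)
    (heq : σ.permMatrix ℝ * A * (σ.permMatrix ℝ)ᵀ =
        Matrix.reindex (finSumFinEquiv.trans (finCongr h)) (finSumFinEquiv.trans (finCongr h))
          (Matrix.fromBlocks 0 X Xᵀ 0)) :
    ∃ B : Matrix (Fin n) (Fin n) ℝ, Bᵀ = -B ∧ matAbs B = A ∧
        spec B = (spec A).map (fun z => Complex.I * z) := by
  classical
  set e := finSumFinEquiv.trans (finCongr h) with he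
  set R : Matrix (Fin n) (Fin n) ℝ := Matrix.reindex e e (Matrix.fromBlocks 0 X Xᵀ 0) with hR
  set R' : Matrix (Fin n) (Fin n) ℝ :=
    Matrix.reindex e e (Matrix.fromBlocks 0 X (-Xᵀ) 0) with hR'
  set B : Matrix (Fin n) (Fin n) ℝ :=
    Equiv.Perm.permMatrix ℝ σ.symm * R' * (Equiv.Perm.permMatrix ℝ σ.symm)ᵀ with hBdef
  have hRapp : ∀ u v, R u v = Matrix.fromBlocks 0 X Xᵀ 0 (e.symm u) (e.symm v) := by
    intro u v; rw [hR, Matrix.reindex_apply, Matrix.submatrix_apply]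
  have hR'app : ∀ u v, R' u v = Matrix.fromBlocks 0 X (-Xᵀ) 0 (e.symm u) (e.symm v) := by
    intro u v; rw [hR', Matrix.reindex_apply, Matrix.submatrix_apply]
  have hRA : ∀ u v, R u v = A (σ u) (σ v) := by
    intro u v; rw [← heq, permConj_apply]
  have hBapp : ∀ i j, B i j = R' (σ.symm i) (σ.symm j) := by
    intro i j; rw [hBdef, permConj_apply]
  have hXnn : ∀ x y, 0 ≤ X x y := by
    intro x y
    have h1 := hRA (e (Sum.inl x)) (e (Sum.inr y))
    have h2 := hRapp (e (Sum.inl x)) (e (Sum.inr y))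
    rw [Equiv.symm_apply_apply, Equiv.symm_apply_apply] at h2
    simp only [Matrix.fromBlocks_apply₁₂] at h2
    rw [← h2, h1]
    exact hnn _ _
  have hR'skew : ∀ u v, R' v u = - R' u v := by
    intro u v
    rw [hR'app, hR'app]
    cases e.symm u <;> cases e.symm v <;>
      simp [Matrix.fromBlocks_apply₁₁, Matrix.fromBlocks_apply₁₂, Matrix.fromBlocks_apply₂₁,
        Matrix.fromBlocks_apply₂₂]
  have hAbs : ∀ u v, |R' u v| = R u v := by
    intro u v
    rw [hR'app, hRapp]
    cases e.symm u with
    | inl x =>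
      cases e.symm v with
      | inl y => simp
      | inr y => simp [abs_of_nonneg (hXnn x y)]
    | inr x =>
      cases e.symm v with
      | inl y => simp [abs_of_nonneg (hXnn y x)]
      | inr y => simp
  refine ⟨B, ?_, ?_, ?_⟩
  · ext i j
    rw [Matrix.transpose_apply, Matrix.neg_apply, hBapp, hBapp, hR'skew]
  · ext i j
    have hAij : A i j = R (σ.symm i) (σ.symm j) := by
      rw [hRA, Equiv.apply_symm_apply, Equiv.apply_symm_apply]
    rw [matAbs, hAij, hBapp, hAbs]
  · -- spectral part
    obtain ⟨ev, hev, -⟩ := symm_spec A hsym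
    set Ac := A.map Complex.ofReal with hAc
    set P : Matrix (Fin n) (Fin n) ℂ := σ.permMatrix ℂ with hP
    set d : Fin n → ℂ := fun u => Sum.elim (fun _ => (1:ℂ)) (fun _ => Complex.I) (e.symm u)
      with hd
    set d' : Fin n → ℂ := fun u => Sum.elim (fun _ => (1:ℂ)) (fun _ => -Complex.I) (e.symm u)
      with hd'
    set D := Matrix.diagonal d with hD
    set D' := Matrix.diagonal d' with hD'
    have hDD' : D * D' = 1 := by
      rw [hD, hD', Matrix.diagonal_mul_diagonal, ← Matrix.diagonal_one]
      refine congrArg Matrix.diagonal (funext fun u => ?_)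
      rw [hd, hd']
      rcases hsu : e.symm u with x | x <;> simp [hsu]
    have hD'D : D' * D = 1 := by
      rw [hD, hD', Matrix.diagonal_mul_diagonal, ← Matrix.diagonal_one]
      refine congrArg Matrix.diagonal (funext fun u => ?_)
      rw [hd, hd']
      rcases hsu : e.symm u with x | x <;> simp [hsu]
    have hPPt : P * Pᵀ = 1 := perm_mul_transpose σ
    have hPtP : Pᵀ * P = 1 := transpose_mul_perm σ
    have hcoe : (Complex.ofReal : ℝ → ℂ) = ⇑Complex.ofRealHom := rfl
    have hRc : R.map Complex.ofReal = P * Ac * Pᵀ := by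
      rw [← heq, hcoe, Matrix.map_mul, Matrix.map_mul, Matrix.transpose_map, ← hcoe, perm_map σ]
    have hkey : R'.map Complex.ofReal = D * (Complex.I • (R.map Complex.ofReal)) * D' := by
      ext u v
      rw [Matrix.map_apply]
      rw [Matrix.mul_diagonal, Matrix.diagonal_mul, Matrix.smul_apply, Matrix.map_apply,
        hR'app, hRapp, hd, hd']
      rcases hsu : e.symm u with x | x <;> rcases hsv : e.symm v with y | y <;>
        simp only [hsu, hsv, Matrix.fromBlocks_apply₁₁, Matrix.fromBlocks_apply₁₂,
          Matrix.fromBlocks_apply₂₁, Matrix.fromBlocks_apply₂₂, Matrix.neg_apply,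
          Matrix.transpose_apply, Matrix.zero_apply, Sum.elim_inl, Sum.elim_inr, smul_eq_mul,
          Complex.ofReal_neg, Complex.ofReal_zero]
      all_goals try ring
      all_goals first
        | linear_combination ((X x y : ℂ)) * Complex.I_mul_I
        | linear_combination (-(X y x : ℂ)) * Complex.I_mul_I
    have hBc : B.map Complex.ofReal = (Pᵀ * D * P) * (Complex.I • Ac) * (Pᵀ * D' * P) := by
      have hPsymm : Equiv.Perm.permMatrix ℂ σ.symm = Pᵀ := by
        rw [hP, ← PEquiv.toMatrix_symm, ← Equiv.toPEquiv_symm]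
      have hsmul : Complex.I • (R.map Complex.ofReal) = P * (Complex.I • Ac) * Pᵀ := by
        rw [hRc, Matrix.mul_smul, Matrix.smul_mul]
      rw [hBdef, hcoe, Matrix.map_mul, Matrix.map_mul, ← hcoe]
      rw [show ((Equiv.Perm.permMatrix ℝ σ.symm)ᵀ).map Complex.ofReal
          = ((Equiv.Perm.permMatrix ℝ σ.symm).map Complex.ofReal)ᵀ from Matrix.transpose_map,
        perm_map σ.symm, hPsymm, Matrix.transpose_transpose, hkey, hsmul]
      simp only [Matrix.mul_assoc]
    have hQQ' : (Pᵀ * D * P) * (Pᵀ * D' * P) = 1 := by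
      have expand : (Pᵀ * D * P) * (Pᵀ * D' * P) = Pᵀ * (D * ((P * Pᵀ) * (D' * P))) := by
        simp only [Matrix.mul_assoc]
      rw [expand, hPPt, one_mul, ← Matrix.mul_assoc D D' P, hDD', one_mul, hPtP]
    have hQ'Q : (Pᵀ * D' * P) * (Pᵀ * D * P) = 1 := by
      have expand : (Pᵀ * D' * P) * (Pᵀ * D * P) = Pᵀ * (D' * ((P * Pᵀ) * (D * P))) := by
        simp only [Matrix.mul_assoc]
      rw [expand, hPPt, one_mul, ← Matrix.mul_assoc D' D P, hD'D, one_mul, hPtP]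
    have hcp : (B.map Complex.ofReal).charpoly = (Complex.I • Ac).charpoly := by
      rw [hBc]
      exact conj_charpoly _ _ _ hQQ' hQ'Q
    show (B.map Complex.ofReal).charpoly.roots = _
    rw [hcp, hev Complex.I]
    have hspecA : spec A = Finset.univ.val.map (fun i => ((ev i : ℂ))) := by
      have h1 := hev 1
      rw [one_smul] at h1
      show Ac.charpoly.roots = _
      rw [h1]
      refine Multiset.map_congr rfl fun x _ => ?_
      rw [one_mul]
    rw [hspecA, Multiset.map_map]
    rfl

end AuxProof

theorem stmt_13 {n : ℕ} (A : Matrix (Fin n) (Fin n) ℝ) (hsym : Aᵀ = A)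
    (hnn : ∀ i j, 0 ≤ A i j) (hirr : MatIrreducible A) :
    (∃ B : Matrix (Fin n) (Fin n) ℝ, Bᵀ = -B ∧ matAbs B = A ∧
        spec B = (spec A).map (fun z => Complex.I * z)) ↔
    (∃ (m l : ℕ) (h : m + l = n) (σ : Equiv.Perm (Fin n)) (X : Matrix (Fin m) (Fin l) ℝ),
      σ.permMatrix ℝ * A * (σ.permMatrix ℝ)ᵀ =
        Matrix.reindex (finSumFinEquiv.trans (finCongr h)) (finSumFinEquiv.trans (finCongr h))
          (Matrix.fromBlocks 0 X Xᵀ 0)) := by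
  constructor
  · rintro ⟨B, hBskew, hBabs, hspec⟩
    rcases Nat.eq_zero_or_pos n with hn0 | hpos
    · subst hn0
      exact ⟨0, 0, rfl, 1, fun a b => 0, by ext i j; exact i.elim0⟩
    obtain ⟨eA, hevA, htrA⟩ := symm_spec A hsym
    obtain ⟨eB, hrB, htrB⟩ := skew_spec B hBskew
    have hspecA : spec A = Finset.univ.val.map (fun i => ((eA i : ℝ) : ℂ)) := by
      have h1 := hevA 1
      rw [one_smul] at h1
      show (A.map Complex.ofReal).charpoly.roots = _
      rw [h1]
      exact Multiset.map_congr rfl fun x _ => one_mul _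
    have key : ∀ k : ℕ, ((B ^ k).trace : ℂ) = Complex.I ^ k * ((A ^ k).trace : ℂ) := by
      intro k
      have h1 : ((spec B).map (fun z => z ^ k)).sum = ((B ^ k).trace : ℂ) := by
        rw [hrB, Multiset.map_map, htrB k]
        rfl
      have h2 : ((spec B).map (fun z => z ^ k)).sum = ∑ i, (Complex.I * (eA i : ℂ)) ^ k := by
        rw [hspec, hspecA, Multiset.map_map, Multiset.map_map]
        rfl
      rw [← h1, h2]
      simp only [mul_pow, ← Finset.mul_sum]
      rw [← htrA k]
    have hAodd : ∀ k, Odd k → (A ^ k).trace = 0 := by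
      rintro k ⟨j, hj⟩
      have hIk : Complex.I ^ k = Complex.I ∨ Complex.I ^ k = -Complex.I := by
        subst hj
        rw [show 2 * j + 1 = 2 * j + 1 from rfl, pow_succ, pow_mul, Complex.I_sq]
        rcases Nat.even_or_odd j with hje | hjo
        · left; rw [hje.neg_one_pow, one_mul]
        · right; rw [hjo.neg_one_pow, neg_one_mul]
      have hk := key k
      rcases hIk with hI | hI <;> rw [hI] at hk <;>
      · have him := congrArg Complex.im hk
        simp at him
        linarith
    have hdiag : ∀ k, Odd k → ∀ i, (A ^ k) i i = 0 := by
      intro k hk i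
      have htr : (A ^ k).trace = 0 := hAodd k hk
      have hnonneg : ∀ t ∈ Finset.univ, 0 ≤ (A ^ k) t t :=
        fun t _ => pow_entry_nonneg A hnn k t t
      have : ∑ t, (A ^ k) t t = 0 := htr
      exact (Finset.sum_eq_zero_iff_of_nonneg hnonneg).mp this i (Finset.mem_univ _)
    have hodd : ∀ k, Odd k → ∀ i, ¬ HasWalk A i i k := by
      intro k hk i hw
      exact ((pow_ne_zero_iff_walk A hnn k i i).mpr hw) (hdiag k hk i)
    obtain ⟨c, hc⟩ := bipartition A hirr hodd ⟨0, hpos⟩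
    exact color_to_blocks A hsym c hc
  · rintro ⟨m, l, h, σ, X, heq⟩
    exact blocks_to_B A hsym hnn m l h σ X heq
end
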